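/- The map (Q̃_{r,s}(x,y,w;θ)ξ)(u) = θ·ē(sw)·ē(η_λ(r)β(u,y))·e^{-nw/2}·ξ(e⁻ʷu + e⁻ʷx) defines a unitary representation of Ẽ on L²(ℝⁿ): each operator is an isometric surjection, and Q̃_{r,s}(g)Q̃_{r,s}(g') = Q̃_{r,s}(gg'). -/

import Mathlib

open MeasureTheory

noncomputable section

/-- The standard inner product on `ℝⁿ`. -/
def beta {n : ℕ} (x y : Fin n → ℝ) : ℝ := ∑ i, x i * y i

/-- `ē(t) = e^{-2πit}`. -/
def ebar (t : ℝ) : ℂ := Complex.exp (-(2 * Real.pi * t) * Complex.I)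

/-- `ē(t)` as an element of the circle group. -/
def ebarT (t : ℝ) : Circle := Circle.exp (-(2 * Real.pi * t))

/-- `η_λ(r) = (e^{2λr}-1)/(2λ)`. -/
def eta (l r : ℝ) : ℝ := (Real.exp (2 * l * r) - 1) / (2 * l)

/-- Multiplication on `Ẽ = ℝⁿ×ℝⁿ×ℝ×𝕋`:
`(x,y,w;θ)(x',y',w';θ') = (x+eʷx', y+e⁻ʷy', w+w', θθ'ē(e⁻ʷη_λ(r)β(x,y')))`. -/
def Etmul {n : ℕ} (l r : ℝ) (a b : (Fin n → ℝ) × (Fin n → ℝ) × ℝ × Circle) :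
    (Fin n → ℝ) × (Fin n → ℝ) × ℝ × Circle :=
  (a.1 + Real.exp a.2.2.1 • b.1,
   a.2.1 + Real.exp (-a.2.2.1) • b.2.1,
   a.2.2.1 + b.2.2.1,
   a.2.2.2 * b.2.2.2 * ebarT (Real.exp (-a.2.2.1) * eta l r * beta a.1 b.2.1))

/-- The operator `Q̃_{r,s}(x,y,w;θ)` on functions on `ℝⁿ`:
`(Q̃_{r,s}(x,y,w;θ)ξ)(u) = θ·ē(sw)·ē(η_λ(r)β(u,y))·e^{-nw/2}·ξ(e⁻ʷu + e⁻ʷx)`. -/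
def Qtrs {n : ℕ} (l r s : ℝ) (g : (Fin n → ℝ) × (Fin n → ℝ) × ℝ × Circle)
    (ξ : (Fin n → ℝ) → ℂ) : (Fin n → ℝ) → ℂ :=
  fun u => (g.2.2.2 : ℂ) * ebar (s * g.2.2.1) * ebar (eta l r * beta u g.2.1) *
    (Real.exp (-((n : ℝ) * g.2.2.1) / 2) : ℝ) *
    ξ (Real.exp (-g.2.2.1) • u + Real.exp (-g.2.2.1) • g.1)

lemma norm_ebar (t : ℝ) : ‖ebar t‖ = 1 := by
  have : ebar t = Complex.exp ((↑(-(2*Real.pi*t)) : ℂ) * Complex.I) := by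
    unfold ebar; push_cast; ring_nf
  rw [this]; exact Complex.norm_exp_ofReal_mul_I _

lemma ebar_ne_zero (t : ℝ) : ebar t ≠ 0 := Complex.exp_ne_zero _

lemma ebar_mul_ebar (a b : ℝ) : ebar a * ebar b = ebar (a + b) := by
  unfold ebar; rw [← Complex.exp_add]; congr 1; push_cast; ring

lemma ebarT_coe (t : ℝ) : (ebarT t : ℂ) = ebar t := by
  rw [ebarT, Circle.coe_exp, ebar]; push_cast; ring_nf

lemma beta_add_right {n : ℕ} (u y : Fin n → ℝ) (c : ℝ) (y' : Fin n → ℝ) :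
    beta u (y + c • y') = beta u y + c * beta u y' := by
  simp only [beta, Pi.add_apply, Pi.smul_apply, smul_eq_mul, mul_add,
    Finset.sum_add_distrib, Finset.mul_sum]
  congr 1
  all_goals exact Finset.sum_congr rfl fun i _ => by ring

lemma beta_smul_left {n : ℕ} (c : ℝ) (u x y : Fin n → ℝ) :
    beta (c • u + c • x) y = c * beta u y + c * beta x y := by
  simp only [beta, Pi.add_apply, Pi.smul_apply, smul_eq_mul, add_mul,
    Finset.sum_add_distrib, Finset.mul_sum]
  congr 1
  all_goals exact Finset.sum_congr rfl fun i _ => by ring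

lemma continuous_beta_left {n : ℕ} (y : Fin n → ℝ) :
    Continuous fun u : Fin n → ℝ => beta u y := by
  unfold beta
  exact continuous_finset_sum _ fun i _ => (continuous_apply i).mul continuous_const

lemma continuous_ebar : Continuous ebar := by
  unfold ebar
  fun_prop

/-- `Q̃_{r,s}` is a unitary representation of `Ẽ` on `L²(ℝⁿ)`: each operator
is an isometric surjection on `L²` and `Q̃_{r,s}(g)Q̃_{r,s}(g') = Q̃_{r,s}(gg')`. -/
theorem stmt_13 {n : ℕ} (l r s : ℝ) :
    (∀ g : (Fin n → ℝ) × (Fin n → ℝ) × ℝ × Circle,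
        Function.Surjective (Qtrs l r s g)) ∧
    (∀ (g : (Fin n → ℝ) × (Fin n → ℝ) × ℝ × Circle) (ξ : (Fin n → ℝ) → ℂ),
        MemLp ξ 2 (volume : Measure (Fin n → ℝ)) →
        (MemLp (Qtrs l r s g ξ) 2 (volume : Measure (Fin n → ℝ)) ∧
          ∫ u, ‖Qtrs l r s g ξ u‖ ^ 2 = ∫ u, ‖ξ u‖ ^ 2)) ∧
    (∀ (g g' : (Fin n → ℝ) × (Fin n → ℝ) × ℝ × Circle) (ξ : (Fin n → ℝ) → ℂ),
        Qtrs l r s g (Qtrs l r s g' ξ) = Qtrs l r s (Etmul l r g g') ξ) := by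
  refine ⟨?_, ?_, ?_⟩
  · -- Surjectivity
    rintro ⟨x, y, w, θ⟩ η
    set C : (Fin n → ℝ) → ℂ := fun u =>
      (θ : ℂ) * ebar (s * w) * ebar (eta l r * beta u y) *
        (Real.exp (-((n : ℝ) * w) / 2) : ℝ) with hC
    have hCne : ∀ u, C u ≠ 0 := by
      intro u
      simp only [hC]
      refine mul_ne_zero (mul_ne_zero (mul_ne_zero ?_ (ebar_ne_zero _)) (ebar_ne_zero _)) ?_
      · exact Circle.coe_ne_zero θ
      · exact_mod_cast Real.exp_ne_zero _
    refine ⟨fun v => (C (Real.exp w • v - x))⁻¹ * η (Real.exp w • v - x), ?_⟩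
    funext u
    have harg : Real.exp w • (Real.exp (-w) • u + Real.exp (-w) • x) - x = u := by
      rw [smul_add, smul_smul, smul_smul, ← Real.exp_add]
      simp
    show C u * ((C (Real.exp w • (Real.exp (-w) • u + Real.exp (-w) • x) - x))⁻¹ *
        η (Real.exp w • (Real.exp (-w) • u + Real.exp (-w) • x) - x)) = η u
    rw [harg, ← mul_assoc, mul_inv_cancel₀ (hCne u), one_mul]
  · -- Isometry on L²
    rintro ⟨x, y, w, θ⟩ ξ hξ
    set c : ℝ := Real.exp (-w) with hc
    have hc0 : c ≠ 0 := Real.exp_ne_zero _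
    have hcpos : 0 < c := Real.exp_pos _
    -- the measurable equiv u ↦ c • (u + x)
    let e₁ : (Fin n → ℝ) ≃ᵐ (Fin n → ℝ) := MeasurableEquiv.addRight x
    let e₂ : (Fin n → ℝ) ≃ᵐ (Fin n → ℝ) :=
      (Homeomorph.smul (Units.mk0 c hc0)).toMeasurableEquiv
    let e : (Fin n → ℝ) ≃ᵐ (Fin n → ℝ) := e₁.trans e₂
    have he : ∀ u, e u = c • (u + x) := fun u => rfl
    have hmap : (volume : Measure (Fin n → ℝ)).map e
        = ENNReal.ofReal |(c ^ Module.finrank ℝ (Fin n → ℝ))⁻¹| • volume := by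
      have hco : ⇑e = ⇑e₂ ∘ ⇑e₁ := rfl
      rw [hco, ← Measure.map_map e₂.measurable e₁.measurable]
      have h2 : Measure.map (⇑e₁) volume = volume := by
        have h : ⇑e₁ = (· + x) := rfl
        rw [h]; exact map_add_right_eq_self volume x
      rw [h2]
      have h3 : ⇑e₂ = (c • ·) := rfl
      rw [h3]
      exact Measure.map_addHaar_smul volume hc0
    have hcomp : MemLp (ξ ∘ e) 2 (volume : Measure (Fin n → ℝ)) :=
      (MeasurableEquiv.memLp_map_measure_iff e).1
        (by rw [hmap]; exact hξ.smul_measure ENNReal.ofReal_ne_top)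
    have hfun : Qtrs l r s (x, y, w, θ) ξ = fun u =>
        ((θ : ℂ) * ebar (s * w) * ebar (eta l r * beta u y) *
          (Real.exp (-((n : ℝ) * w) / 2) : ℝ)) * (ξ ∘ e) u := by
      funext u
      simp only [Qtrs, Function.comp_apply, he, smul_add]
      rfl
    have hCc : Continuous fun u : Fin n → ℝ =>
        ((θ : ℂ) * ebar (s * w) * ebar (eta l r * beta u y) *
          (Real.exp (-((n : ℝ) * w) / 2) : ℝ)) := by
      apply Continuous.mul _ continuous_const
      exact continuous_const.mul (continuous_ebar.comp (continuous_const.mul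
        (continuous_beta_left y)))
    have hnormC : ∀ u : Fin n → ℝ,
        ‖(θ : ℂ) * ebar (s * w) * ebar (eta l r * beta u y) *
          (Real.exp (-((n : ℝ) * w) / 2) : ℝ)‖ = Real.exp (-((n : ℝ) * w) / 2) := by
      intro u
      rw [norm_mul, norm_mul, norm_mul, norm_ebar, norm_ebar,
        Complex.norm_real, Real.norm_eq_abs, abs_of_pos (Real.exp_pos _)]
      simp [Circle.norm_coe]
    have haesm : AEStronglyMeasurable (Qtrs l r s (x, y, w, θ) ξ)
        (volume : Measure (Fin n → ℝ)) := by
      rw [hfun]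
      exact hCc.aestronglyMeasurable.mul hcomp.1
    refine ⟨?_, ?_⟩
    · refine MemLp.of_le_mul (c := Real.exp (-((n : ℝ) * w) / 2)) hcomp haesm
        (Filter.Eventually.of_forall fun u => ?_)
      simp only [hfun]
      rw [norm_mul, hnormC]
    · have hnorm : ∀ u, ‖Qtrs l r s (x, y, w, θ) ξ u‖ ^ 2
          = Real.exp (-((n : ℝ) * w)) * ‖ξ (c • (u + x))‖ ^ 2 := by
        intro u
        simp only [hfun]
        rw [norm_mul, hnormC, mul_pow]
        rw [show Real.exp (-((n : ℝ) * w) / 2) ^ 2 = Real.exp (-((n : ℝ) * w)) by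
          rw [pow_two, ← Real.exp_add]; ring_nf]
        rfl
      calc ∫ u, ‖Qtrs l r s (x, y, w, θ) ξ u‖ ^ 2
          = ∫ u, Real.exp (-((n : ℝ) * w)) * ‖ξ (c • (u + x))‖ ^ 2 := by
            simp only [hnorm]
        _ = Real.exp (-((n : ℝ) * w)) * ∫ u, ‖ξ (c • (u + x))‖ ^ 2 :=
            integral_const_mul _ _
        _ = Real.exp (-((n : ℝ) * w)) * ∫ u, ‖ξ (c • u)‖ ^ 2 := by
            rw [integral_add_right_eq_self (fun u => ‖ξ (c • u)‖ ^ 2) x]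
        _ = Real.exp (-((n : ℝ) * w)) *
            (|(c ^ Module.finrank ℝ (Fin n → ℝ))⁻¹| • ∫ u, ‖ξ u‖ ^ 2) := by
            rw [Measure.integral_comp_smul volume (fun v => ‖ξ v‖ ^ 2) c]
        _ = ∫ u, ‖ξ u‖ ^ 2 := by
            rw [smul_eq_mul, ← mul_assoc]
            have hfr : Module.finrank ℝ (Fin n → ℝ) = n := by simp
            rw [hfr, hc, ← Real.exp_nat_mul, abs_inv, abs_of_pos (Real.exp_pos _),
              ← Real.exp_neg, ← Real.exp_add]
            norm_num
  · -- Multiplicativity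
    rintro ⟨x, y, w, θ⟩ ⟨x', y', w', θ'⟩ ξ
    funext u
    simp only [Qtrs, Etmul, Circle.coe_mul, ebarT_coe]
    rw [beta_add_right u y (Real.exp (-w)) y', beta_smul_left (Real.exp (-w)) u x y']
    have harg : Real.exp (-w') • (Real.exp (-w) • u + Real.exp (-w) • x)
        + Real.exp (-w') • x'
        = Real.exp (-(w + w')) • u + Real.exp (-(w + w')) • (x + Real.exp w • x') := by
      rw [smul_add, smul_smul, smul_smul, smul_add, smul_smul]
      simp only [← Real.exp_add]
      ring_nf
    rw [← harg]
    rw [show Real.exp (-((n:ℝ) * (w + w')) / 2)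
        = Real.exp (-((n:ℝ) * w) / 2) * Real.exp (-((n:ℝ) * w') / 2) by
      rw [← Real.exp_add]; ring_nf]
    set B := Real.exp (-w') • (Real.exp (-w) • u + Real.exp (-w) • x)
        + Real.exp (-w') • x' with hB
    trans ((θ : ℂ) * (θ' : ℂ) *
        ebar (s * w + (s * w' + (eta l r * beta u y +
          eta l r * (Real.exp (-w) * beta u y' + Real.exp (-w) * beta x y')))) *
        (Real.exp (-((n:ℝ) * w) / 2) : ℝ) * (Real.exp (-((n:ℝ) * w') / 2) : ℝ) * ξ B)
    · simp only [← ebar_mul_ebar]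
      ring
    · rw [show s * w + (s * w' + (eta l r * beta u y +
          eta l r * (Real.exp (-w) * beta u y' + Real.exp (-w) * beta x y')))
        = Real.exp (-w) * eta l r * beta x y' +
          (s * (w + w') + eta l r * (beta u y + Real.exp (-w) * beta u y')) by ring]
      simp only [← ebar_mul_ebar]
      push_cast
      ring
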